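/- arXiv:2204.06912 — 2 statements merged into one kernel-verified Lean document; each statement's English description precedes it below -/
import Mathlib

section
/- Let X be a singular real n×n matrix, and let V_⊥ ∈ ℝ^{n×m} and V̄ ∈ ℝ^{n×p} (with p = n−m) be matrices whose columns form orthonormal bases of the nullspace of X and of the row space of X, respectively. Then the p×p matrix V̄ᵀ X V̄ is singular if and only if X is defective with zero as a defective eigenvalue (i.e., the geometric multiplicity of the eigenvalue 0 of X is strictly smaller than its algebraic multiplicity). -/
open Matrix Polynomial

lemma my_charpoly_conj {ι R : Type*} [Fintype ι] [DecidableEq ι] [CommRing R]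
    (P N : Matrix ι ι R) (hP : Pᵀ * P = 1) :
    (Pᵀ * N * P).charpoly = N.charpoly := by
  have hmap : charmatrix (Pᵀ * N * P)
      = (Pᵀ.map C) * charmatrix N * (P.map C) := by
    rw [charmatrix, charmatrix]
    rw [mul_sub, sub_mul]
    congr 1
    · have hc : Commute (Matrix.scalar ι (X : R[X])) (Pᵀ.map C) :=
        Matrix.scalar_commute _ (fun r' => Commute.all _ _) _
      rw [← hc.eq, Matrix.mul_assoc, ← Matrix.map_mul, hP]
      simp
    · simp [← Matrix.map_mul, Matrix.mul_assoc]
  have hdet : (Pᵀ.map C).det * (P.map C).det = 1 := by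
    rw [← Matrix.det_mul, ← Matrix.map_mul, hP]
    simp
  rw [Matrix.charpoly, Matrix.charpoly, hmap, Matrix.det_mul, Matrix.det_mul]
  calc (Pᵀ.map C).det * (charmatrix N).det * (P.map C).det
      = ((Pᵀ.map C).det * (P.map C).det) * (charmatrix N).det := by ring
    _ = (charmatrix N).det := by rw [hdet, one_mul]

lemma my_charpoly_zero (m : ℕ) : (0 : Matrix (Fin m) (Fin m) ℝ).charpoly = X ^ m := by
  rw [Matrix.charpoly, charmatrix]
  simp [Matrix.scalar_apply, Matrix.det_diagonal]

open Matrix Polynomial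

/-- Lemma 1: with `X` a singular real `n×n` matrix, `V⊥` having orthonormal columns
spanning `ker X` and `V̄` having orthonormal columns spanning the orthogonal
complement of `ker X` (the row space of `X`), the matrix `V̄ᵀ X V̄` is singular
iff `X` is defective with `0` as a defective eigenvalue (geometric multiplicity
of the eigenvalue `0` strictly smaller than its algebraic multiplicity). -/
theorem stmt0 {n m p : ℕ} (hp : p = n - m) (hm : 0 < m)
    (X : Matrix (Fin n) (Fin n) ℝ)
    (hXsing : X.det = 0)
    (Vperp : Matrix (Fin n) (Fin m) ℝ) (Vbar : Matrix (Fin n) (Fin p) ℝ)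
    (horth1 : Vbarᵀ * Vperp = 0)
    (horth2 : Vbarᵀ * Vbar = 1)
    (horth3 : Vperpᵀ * Vperp = 1)
    (hker : LinearMap.range Vperp.mulVecLin = LinearMap.ker X.mulVecLin)
    (hrow : LinearMap.range Vbar.mulVecLin = LinearMap.range Xᵀ.mulVecLin) :
    (Vbarᵀ * X * Vbar).det = 0 ↔
      Module.finrank ℝ (LinearMap.ker X.mulVecLin) <
        Polynomial.rootMultiplicity 0 X.charpoly := by
  -- Vperp.mulVecLin is injective
  have hinj : Function.Injective Vperp.mulVecLin := by
    have hcomp : (Vperpᵀ * Vperp).mulVecLin = (1 : Matrix (Fin m) (Fin m) ℝ).mulVecLin := by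
      rw [horth3]
    rw [Matrix.mulVecLin_mul, Matrix.mulVecLin_one] at hcomp
    have h2 : Function.Injective (⇑Vperpᵀ.mulVecLin ∘ ⇑Vperp.mulVecLin) := by
      rw [← LinearMap.coe_comp, hcomp]; exact fun a b h => h
    exact Function.Injective.of_comp h2
  -- finrank of the kernel is m
  have hfr : Module.finrank ℝ (LinearMap.ker X.mulVecLin) = m := by
    rw [← hker, LinearMap.finrank_range_of_inj hinj]
    simp
  have hmn : m ≤ n := by
    have := hfr ▸ Submodule.finrank_le (LinearMap.ker X.mulVecLin)
    simpa using this
  have hn : p + m = n := by omega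
  have e : Fin p ⊕ Fin m ≃ Fin n := finSumFinEquiv.trans (finCongr hn)
  -- X * Vperp = 0
  have hXVp : X * Vperp = 0 := by
    ext i j
    have hmem : Vperp.mulVec (Pi.single j 1) ∈ LinearMap.ker X.mulVecLin := by
      rw [← hker]; exact ⟨Pi.single j 1, rfl⟩
    have h0 : X.mulVec (Vperp.mulVec (Pi.single j 1)) = 0 := hmem
    have := congrFun h0 i
    simpa [Matrix.mulVec_mulVec, Matrix.mulVec_single, Matrix.mulVec, dotProduct, Matrix.mul_apply, Pi.single_apply] using this
  have hVpVb : Vperpᵀ * Vbar = 0 := by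
    have := congrArg Matrix.transpose horth1
    simpa [Matrix.transpose_mul] using this
  set Q : Matrix (Fin n) (Fin p ⊕ Fin m) ℝ := Matrix.fromCols Vbar Vperp with hQdef
  have hQ : Qᵀ * Q = 1 := by
    rw [hQdef, Matrix.transpose_fromCols, Matrix.fromRows_mul_fromCols,
      horth2, horth1, hVpVb, horth3, Matrix.fromBlocks_one]
  set A : Matrix (Fin p) (Fin p) ℝ := Vbarᵀ * X * Vbar with hAdef
  have hQXQ : Qᵀ * X * Q = Matrix.fromBlocks A 0 (Vperpᵀ * X * Vbar) 0 := by
    rw [hQdef, Matrix.mul_assoc, Matrix.mul_fromCols, hXVp,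
      Matrix.transpose_fromCols, Matrix.fromRows_mul_fromCols]
    simp [hAdef, Matrix.mul_assoc]
  set Q' : Matrix (Fin n) (Fin n) ℝ := Q.submatrix id ⇑e.symm with hQ'def
  have hid : (id : Fin n → Fin n) = ⇑(Equiv.refl (Fin n)) := rfl
  have hQ'Q' : Q'ᵀ * Q' = 1 := by
    rw [hQ'def, Matrix.transpose_submatrix, hid, Matrix.submatrix_mul_equiv, hQ,
      Matrix.submatrix_one_equiv]
  have hconj : Q'ᵀ * X * Q' = (Qᵀ * X * Q).submatrix ⇑e.symm ⇑e.symm := by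
    rw [hQ'def, Matrix.transpose_submatrix]
    conv_lhs => rw [show X = X.submatrix ⇑(Equiv.refl (Fin n)) ⇑(Equiv.refl (Fin n)) by simp]
    rw [hid, Matrix.submatrix_mul_equiv, Matrix.submatrix_mul_equiv]
  -- characteristic polynomial factorization
  have hcp : X.charpoly = A.charpoly * (Polynomial.X : ℝ[X]) ^ m := by
    have h1 : (Q'ᵀ * X * Q').charpoly = X.charpoly := my_charpoly_conj Q' X hQ'Q'
    rw [← h1, hconj, ← Matrix.reindex_apply, Matrix.charpoly_reindex, hQXQ,
      Matrix.charpoly_fromBlocks_zero₁₂, my_charpoly_zero]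
  have hAcp : A.charpoly ≠ 0 := (Matrix.charpoly_monic A).ne_zero
  have hXm : (Polynomial.X : ℝ[X]) ^ m ≠ 0 := pow_ne_zero m Polynomial.X_ne_zero
  have hrm : Polynomial.rootMultiplicity 0 X.charpoly
      = Polynomial.rootMultiplicity 0 A.charpoly + m := by
    rw [hcp, Polynomial.rootMultiplicity_mul (mul_ne_zero hAcp hXm)]
    congr 1
    simpa using Polynomial.rootMultiplicity_X_sub_C_pow (0 : ℝ) m
  rw [hfr, hrm]
  have hdet : A.det = 0 ↔ A.charpoly.IsRoot 0 := by
    rw [Matrix.det_eq_sign_charpoly_coeff, Polynomial.IsRoot,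
      ← Polynomial.coeff_zero_eq_eval_zero]
    constructor
    · intro h
      have : ((-1 : ℝ) ^ Fintype.card (Fin p)) ≠ 0 := by positivity
      field_simp at h
      exact (mul_eq_zero.mp h).resolve_left this
    · intro h; rw [h, mul_zero]
  rw [hdet, ← Polynomial.rootMultiplicity_pos hAcp]
  omega
end

section
/- Let A ∈ ℝ^{n×n} be singular with nullspace of dimension m, and V̄ ∈ ℝ^{n×p}, V_⊥ ∈ ℝ^{n×m} (p = n−m) with orthonormal columns spanning the row space and nullspace of A respectively. Assume zero is not a defective eigenvalue of A, so V̄ᵀAV̄ is invertible. Let P̄ ∈ ℝ^{p×p}, P_⊥ ∈ ℝ^{m×m} and define P_×ᵀ = −P_⊥ V_⊥ᵀ A V̄ (V̄ᵀAV̄)^{−1}, S̄ = P̄V̄ᵀ + P_× V_⊥ᵀ, S_⊥ = P_⊥V_⊥ᵀ + P_×ᵀV̄ᵀ. Then the cross term U := V̄ᵀAᵀS_⊥ᵀ + S̄ A V_⊥ vanishes: U = 0. -/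
open Matrix

/-- With `A V⊥ = 0`, `V̄ᵀ A V̄` invertible, and `Pₓᵀ = −P⊥ V⊥ᵀ A V̄ (V̄ᵀ A V̄)⁻¹`,
`S̄ = P̄ V̄ᵀ + Pₓ V⊥ᵀ`, `S⊥ = P⊥ V⊥ᵀ + Pₓᵀ V̄ᵀ`, the cross term
`U = V̄ᵀ Aᵀ S⊥ᵀ + S̄ A V⊥` vanishes. -/
theorem stmt11 {n p m : ℕ} (hp : p = n - m)
    (A : Matrix (Fin n) (Fin n) ℝ)
    (Vbar : Matrix (Fin n) (Fin p) ℝ) (Vperp : Matrix (Fin n) (Fin m) ℝ)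
    (horth1 : Vbarᵀ * Vperp = 0)
    (horth2 : Vbarᵀ * Vbar = 1)
    (horth3 : Vperpᵀ * Vperp = 1)
    (hker : A * Vperp = 0)
    (hinv : IsUnit (Vbarᵀ * A * Vbar))
    (Pbar : Matrix (Fin p) (Fin p) ℝ) (Pperp : Matrix (Fin m) (Fin m) ℝ)
    (Px : Matrix (Fin p) (Fin m) ℝ)
    (hPx : Pxᵀ = -(Pperp * Vperpᵀ * A * Vbar * (Vbarᵀ * A * Vbar)⁻¹))
    (Sbar : Matrix (Fin p) (Fin n) ℝ) (hSbar : Sbar = Pbar * Vbarᵀ + Px * Vperpᵀ)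
    (Sperp : Matrix (Fin m) (Fin n) ℝ)
    (hSperp : Sperp = Pperp * Vperpᵀ + Pxᵀ * Vbarᵀ) :
    Vbarᵀ * Aᵀ * Sperpᵀ + Sbar * A * Vperp = 0 := by
  have h2 : Sbar * A * Vperp = 0 := by
    rw [Matrix.mul_assoc, hker, Matrix.mul_zero]
  have hdet : IsUnit (Vbarᵀ * A * Vbar).det :=
    (Matrix.isUnit_iff_isUnit_det _).mp hinv
  have hcanc : (Vbarᵀ * A * Vbar)⁻¹ * (Vbarᵀ * A * Vbar) = 1 :=
    Matrix.nonsing_inv_mul _ hdet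
  have h1 : Sperp * A * Vbar = 0 := by
    rw [hSperp, hPx]
    rw [Matrix.add_mul, Matrix.add_mul]
    have : -(Pperp * Vperpᵀ * A * Vbar * (Vbarᵀ * A * Vbar)⁻¹) * Vbarᵀ * A * Vbar
        = -(Pperp * Vperpᵀ * A * Vbar) := by
      rw [Matrix.neg_mul, Matrix.neg_mul, Matrix.neg_mul]
      rw [show Pperp * Vperpᵀ * A * Vbar * (Vbarᵀ * A * Vbar)⁻¹ * Vbarᵀ * A * Vbar
          = Pperp * Vperpᵀ * A * Vbar * ((Vbarᵀ * A * Vbar)⁻¹ * (Vbarᵀ * A * Vbar)) by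
        simp only [Matrix.mul_assoc]]
      rw [hcanc, Matrix.mul_one]
    rw [this]
    abel
  have key : Vbarᵀ * Aᵀ * Sperpᵀ = (Sperp * A * Vbar)ᵀ := by
    rw [Matrix.transpose_mul, Matrix.transpose_mul, Matrix.mul_assoc]
  rw [key, h1, h2]
  simp
end
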